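/- Let D = (d_1, ..., d_n) be a nonincreasing sequence of positive integers and let i ∈ [1..n] with d_1 < n. Then the sequence D^{⟨i⟩} obtained by laying off d_i (subtracting 1 from the d_i largest integers d_j with j ≠ i and removing d_i) is graphic if and only if D is graphic. -/

import Mathlib

open List SimpleGraph

lemma perm_exists_comp {n : ℕ} {f g : Fin n → ℕ} (h : List.ofFn f ~ List.ofFn g) :
    ∃ σ : Equiv.Perm (Fin n), f ∘ σ = g := by
  refine ⟨(Tuple.sort g).symm.trans (Tuple.sort f), ?_⟩
  have h1 : List.ofFn (f ∘ Tuple.sort f) = List.ofFn (g ∘ Tuple.sort g) :=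
    List.Perm.eq_of_sortedLE (Tuple.monotone_sort f).sortedLE_ofFn (Tuple.monotone_sort g).sortedLE_ofFn
      ((((Tuple.sort f).ofFn_comp_perm f).trans h).trans ((Tuple.sort g).ofFn_comp_perm g).symm)
  have h2 : f ∘ Tuple.sort f = g ∘ Tuple.sort g := List.ofFn_injective h1
  funext v
  have := congrFun h2 ((Tuple.sort g).symm v)
  simpa using this

lemma card_neighborSet_comap {α β : Type*} (e : α ≃ β) (G : SimpleGraph β) (v : α) :
    Nat.card ((G.comap e).neighborSet v) = Nat.card (G.neighborSet (e v)) :=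
  Nat.card_congr (e.subtypeEquiv fun _ => Iff.rfl)

lemma graphic_transfer {a b : ℕ} {g : Fin a → ℕ} {f : Fin b → ℕ}
    (h : List.ofFn g ~ List.ofFn f)
    (H : ∃ G : SimpleGraph (Fin a), ∀ v, Nat.card (G.neighborSet v) = g v) :
    ∃ G : SimpleGraph (Fin b), ∀ v, Nat.card (G.neighborSet v) = f v := by
  have hab : a = b := by simpa using h.length_eq
  subst hab
  obtain ⟨G, hG⟩ := H
  obtain ⟨σ, hσ⟩ := perm_exists_comp h
  exact ⟨G.comap σ, fun v => by
    rw [show (σ : Fin a → Fin a) = (σ : Fin a ≃ Fin a) from rfl, card_neighborSet_comap,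
      hG, ← hσ]; rfl⟩

/-- A finite sequence of natural numbers (possibly containing zeros) is graphic if
it is, up to permutation, the degree sequence of a simple graph on `l.length` vertices.
(Zero entries correspond to isolated vertices, so this also captures graphicness
after removal of zeros.) -/
def IsGraphic (l : List ℕ) : Prop :=
  ∃ G : SimpleGraph (Fin l.length),
    List.Perm (List.ofFn fun v => Nat.card (G.neighborSet v)) l

lemma isGraphic_ofFn_iff {n : ℕ} {f : Fin n → ℕ} :
    IsGraphic (List.ofFn f) ↔ ∃ G : SimpleGraph (Fin n), ∀ v, Nat.card (G.neighborSet v) = f v := by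
  constructor
  · rintro ⟨G, hG⟩
    exact graphic_transfer hG ⟨G, fun v => rfl⟩
  · rintro H
    have hl : n = (List.ofFn f).length := by simp
    have hperm : List.ofFn f ~ List.ofFn (fun v : Fin (List.ofFn f).length => f (finCongr hl.symm v)) := by
      apply List.Perm.of_eq
      apply List.ext_get (by simp)
      intro i h1 h2
      simp [List.get_ofFn]
    obtain ⟨G, hG⟩ := graphic_transfer hperm H
    refine ⟨G, ?_⟩
    have : (List.ofFn fun v => Nat.card (G.neighborSet v)) = List.ofFn (fun v : Fin (List.ofFn f).length => f (finCongr hl.symm v)) := by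
      congr 1; funext v; exact hG v
    rw [this]
    exact hperm.symm

open Finset
open scoped Classical

variable {m : ℕ}

/-- the first `k` vertices other than `w` -/
def layS (w : Fin (m + 1)) (k : ℕ) : Finset (Fin (m + 1)) :=
  (Finset.univ.filter fun j : Fin m => j.1 < k).image w.succAbove

lemma mem_layS {w : Fin (m + 1)} {k : ℕ} {x : Fin (m + 1)} :
    x ∈ layS w k ↔ ∃ j : Fin m, j.1 < k ∧ w.succAbove j = x := by
  simp [layS, and_comm]

lemma not_mem_layS {w : Fin (m + 1)} {k : ℕ} : w ∉ layS w k := by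
  simp only [mem_layS]
  rintro ⟨j, -, hj⟩
  exact Fin.succAbove_ne w j hj

lemma card_layS {w : Fin (m + 1)} {k : ℕ} (hk : k ≤ m) : (layS w k).card = k := by
  rw [layS, Finset.card_image_of_injective _ (Fin.succAbove_right_injective)]
  rw [Finset.card_filter, Fin.sum_univ_eq_sum_range (fun i => if i < k then 1 else 0) m, ← Finset.card_filter]
  have : (Finset.range m).filter (fun i => i < k) = Finset.range k := by
    ext x; simp; omega
  rw [this, Finset.card_range]

lemma succAbove_mem_layS_iff {w : Fin (m + 1)} {k : ℕ} {j : Fin m} :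
    w.succAbove j ∈ layS w k ↔ j.1 < k := by
  rw [mem_layS]
  constructor
  · rintro ⟨j', hj', hjj⟩
    rwa [Fin.succAbove_right_injective hjj] at hj'
  · exact fun h => ⟨j, h, rfl⟩

lemma delete_vertex (f : Fin (m + 1) → ℕ) (w : Fin (m + 1))
    (G : SimpleGraph (Fin (m + 1))) (hdeg : ∀ v, G.degree v = f v)
    (hN : G.neighborFinset w = layS w (f w)) (j : Fin m) :
    (G.comap w.succAbove).degree j = f (w.succAbove j) - (if j.1 < f w then 1 else 0) := by
  have himg : ((G.comap w.succAbove).neighborFinset j).image w.succAbove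
      = (G.neighborFinset (w.succAbove j)).erase w := by
    ext y
    simp only [Finset.mem_image, mem_neighborFinset, comap_adj, Finset.mem_erase]
    constructor
    · rintro ⟨y', hy', rfl⟩
      exact ⟨Fin.succAbove_ne w y', hy'⟩
    · rintro ⟨hyw, hy⟩
      obtain ⟨y', rfl⟩ := Fin.exists_succAbove_eq hyw
      exact ⟨y', hy, rfl⟩
  have hcard : (G.comap w.succAbove).degree j = ((G.neighborFinset (w.succAbove j)).erase w).card := by
    rw [← himg, Finset.card_image_of_injective _ Fin.succAbove_right_injective]; rfl
  rw [hcard]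
  by_cases hw : w ∈ G.neighborFinset (w.succAbove j)
  · have hmem : w.succAbove j ∈ G.neighborFinset w := by
      rw [mem_neighborFinset] at hw ⊢; exact hw.symm
    rw [hN, succAbove_mem_layS_iff] at hmem
    rw [Finset.card_erase_of_mem hw, if_pos hmem, ← hdeg]; rfl
  · have hmem : ¬ w.succAbove j ∈ G.neighborFinset w := by
      rw [mem_neighborFinset] at hw ⊢; exact fun h => hw h.symm
    rw [hN, succAbove_mem_layS_iff] at hmem
    rw [Finset.erase_eq_of_notMem hw, if_neg hmem, Nat.sub_zero, ← hdeg]; rfl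

/-- add a vertex `w` joined to the first `k` other vertices -/
def addVert (G' : SimpleGraph (Fin m)) (w : Fin (m + 1)) (k : ℕ) : SimpleGraph (Fin (m + 1)) where
  Adj x y :=
    (∃ jx jy : Fin m, w.succAbove jx = x ∧ w.succAbove jy = y ∧ G'.Adj jx jy) ∨
    (x = w ∧ ∃ j : Fin m, w.succAbove j = y ∧ j.1 < k) ∨
    (y = w ∧ ∃ j : Fin m, w.succAbove j = x ∧ j.1 < k)
  symm := by
    constructor
    rintro x y (⟨jx, jy, hx, hy, h⟩ | ⟨hx, j, hy, hj⟩ | ⟨hy, j, hx, hj⟩)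
    · exact Or.inl ⟨jy, jx, hy, hx, h.symm⟩
    · exact Or.inr (Or.inr ⟨hx, j, hy, hj⟩)
    · exact Or.inr (Or.inl ⟨hy, j, hx, hj⟩)
  loopless := by
    constructor
    rintro x (⟨jx, jy, hx, hy, h⟩ | ⟨hx, j, hy, hj⟩ | ⟨hy, j, hx, hj⟩)
    · rw [← hx] at hy; rw [Fin.succAbove_right_injective hy] at h; exact G'.loopless.irrefl _ h
    · rw [hx] at hy; exact Fin.succAbove_ne w j hy
    · rw [hy] at hx; exact Fin.succAbove_ne w j hx

lemma addVert_degree_w (G' : SimpleGraph (Fin m)) (w : Fin (m + 1)) {k : ℕ} (hk : k ≤ m) :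
    (addVert G' w k).degree w = k := by
  have : (addVert G' w k).neighborFinset w = layS w k := by
    ext y
    simp only [mem_neighborFinset, mem_layS]
    constructor
    · rintro (⟨jx, jy, hx, hy, h⟩ | ⟨hx, j, hy, hj⟩ | ⟨hy, j, hx, hj⟩)
      · exact absurd hx (Fin.succAbove_ne w jx)
      · exact ⟨j, hj, hy⟩
      · exact absurd hx (Fin.succAbove_ne w j)
    · rintro ⟨j, hj, hy⟩
      exact Or.inr (Or.inl ⟨rfl, j, hy, hj⟩)
  rw [SimpleGraph.degree, this, card_layS hk]

lemma addVert_degree_other (G' : SimpleGraph (Fin m)) (w : Fin (m + 1)) (k : ℕ) (j0 : Fin m) :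
    (addVert G' w k).degree (w.succAbove j0) = G'.degree j0 + (if j0.1 < k then 1 else 0) := by
  have key : (addVert G' w k).neighborFinset (w.succAbove j0) =
      (G'.neighborFinset j0).image w.succAbove ∪ (if j0.1 < k then {w} else ∅) := by
    ext y
    simp only [mem_neighborFinset, Finset.mem_union, Finset.mem_image]
    constructor
    · rintro (⟨jx, jy, hx, hy, h⟩ | ⟨hx, j, hy, hj⟩ | ⟨hy, j, hx, hj⟩)
      · rw [Fin.succAbove_right_injective hx] at h
        exact Or.inl ⟨jy, h, hy⟩
      · exact absurd hx (Fin.succAbove_ne w j0)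
      · rw [Fin.succAbove_right_injective hx] at hj
        refine Or.inr ?_
        rw [if_pos hj, hy]; exact Finset.mem_singleton_self w
    · rintro (⟨jy, h, hy⟩ | hy)
      · exact Or.inl ⟨j0, jy, rfl, hy, h⟩
      · split_ifs at hy with hj
        · rw [Finset.mem_singleton] at hy
          subst hy
          exact Or.inr (Or.inr ⟨rfl, j0, rfl, hj⟩)
        · exact absurd hy (Finset.notMem_empty y)
  have hdisj : Disjoint ((G'.neighborFinset j0).image w.succAbove)
      (if j0.1 < k then ({w} : Finset (Fin (m+1))) else ∅) := by
    split_ifs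
    · rw [Finset.disjoint_singleton_right, Finset.mem_image]
      rintro ⟨j, -, hj⟩
      exact Fin.succAbove_ne w j hj
    · exact Finset.disjoint_empty_right _
  rw [SimpleGraph.degree, key, Finset.card_union_of_disjoint hdisj,
    Finset.card_image_of_injective _ Fin.succAbove_right_injective]
  congr 1
  split_ifs <;> simp


section Switch

variable {V : Type*} [DecidableEq V] [Fintype V]

/-- the four (unordered) pairs of the alternating 4-cycle `w v t u` -/
def togglePairs (w u v t x y : V) : Prop :=
  (x = w ∧ y = v) ∨ (x = v ∧ y = w) ∨ (x = w ∧ y = u) ∨ (x = u ∧ y = w) ∨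
  (x = u ∧ y = t) ∨ (x = t ∧ y = u) ∨ (x = v ∧ y = t) ∨ (x = t ∧ y = v)

/-- toggle the four edges of the alternating 4-cycle `w v t u` -/
def toggle (G : SimpleGraph V) (w u v t : V) : SimpleGraph V where
  Adj x y := (G.Adj x y ∧ ¬ togglePairs w u v t x y) ∨
    (¬ G.Adj x y ∧ x ≠ y ∧ togglePairs w u v t x y)
  symm := by
    have hcomm : ∀ x y : V, togglePairs w u v t x y → togglePairs w u v t y x := by
      unfold togglePairs; tauto
    constructor
    rintro x y (⟨h, hP⟩ | ⟨h, hxy, hP⟩)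
    · exact Or.inl ⟨h.symm, fun hc => hP (hcomm y x hc)⟩
    · exact Or.inr ⟨fun hc => h hc.symm, hxy.symm, hcomm x y hP⟩
  loopless := by
    constructor
    rintro x (⟨h, -⟩ | ⟨-, hxy, -⟩)
    · exact G.loopless.irrefl x h
    · exact hxy rfl

lemma card_insert_erase {s : Finset V} {a b : V} (ha : a ∈ s) (hb : b ∉ s) :
    (insert b (s.erase a)).card = s.card := by
  rw [Finset.card_insert_of_notMem (fun hc => hb (Finset.mem_of_mem_erase hc)),
    Finset.card_erase_of_mem ha]
  have : 1 ≤ s.card := Finset.card_pos.2 ⟨a, ha⟩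
  omega

lemma toggle_nbhd_core {G : SimpleGraph V} {w u v t a p q : V}
    (hap : G.Adj a p) (haq : ¬ G.Adj a q) (haq' : a ≠ q)
    (hPiff : ∀ y, togglePairs w u v t a y ↔ (y = p ∨ y = q)) :
    (toggle G w u v t).neighborFinset a = insert q ((G.neighborFinset a).erase p) := by
  ext y
  simp only [mem_neighborFinset, Finset.mem_insert, Finset.mem_erase]
  show ((G.Adj a y ∧ ¬ togglePairs w u v t a y) ∨
    (¬ G.Adj a y ∧ a ≠ y ∧ togglePairs w u v t a y)) ↔ _
  rw [hPiff]
  constructor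
  · rintro (⟨h, hP⟩ | ⟨h, -, (rfl | rfl)⟩)
    · exact Or.inr ⟨fun hc => hP (Or.inl hc), h⟩
    · exact absurd hap h
    · exact Or.inl rfl
  · rintro (rfl | ⟨hyp, h⟩)
    · exact Or.inr ⟨haq, haq', Or.inr rfl⟩
    · exact Or.inl ⟨h, by rintro (rfl | rfl) <;> [exact hyp rfl; exact haq h]⟩

variable {G : SimpleGraph V} {w u v t : V}

lemma toggle_degree_eq (hwu : w ≠ u) (hwv : w ≠ v) (hwt : w ≠ t) (huv : u ≠ v)
    (hut : u ≠ t) (hvt : v ≠ t)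
    (hGwv : G.Adj w v) (hGwu : ¬ G.Adj w u) (hGut : G.Adj u t) (hGvt : ¬ G.Adj v t)
    (x : V) : (toggle G w u v t).degree x = G.degree x := by
  by_cases hxw : x = w
  · subst hxw
    rw [SimpleGraph.degree, SimpleGraph.degree, toggle_nbhd_core hGwv hGwu hwu
      (fun y => by unfold togglePairs; simp [hwv, hwu, hwt])]
    exact card_insert_erase ((mem_neighborFinset _ _ _).2 hGwv)
      (fun hc => hGwu ((mem_neighborFinset _ _ _).1 hc))
  by_cases hxu : x = u
  · subst hxu
    rw [SimpleGraph.degree, SimpleGraph.degree, toggle_nbhd_core hGut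
      (fun hc => hGwu hc.symm) (Ne.symm hwu)
      (fun y => by unfold togglePairs; simp [Ne.symm hwu, huv, hut]; tauto)]
    exact card_insert_erase ((mem_neighborFinset _ _ _).2 hGut)
      (fun hc => hGwu (((mem_neighborFinset _ _ _).1 hc).symm))
  by_cases hxv : x = v
  · subst hxv
    rw [SimpleGraph.degree, SimpleGraph.degree, toggle_nbhd_core hGwv.symm hGvt
      hvt (fun y => by unfold togglePairs; simp [Ne.symm hwv, Ne.symm huv, hvt])]
    exact card_insert_erase ((mem_neighborFinset _ _ _).2 hGwv.symm)
      (fun hc => hGvt ((mem_neighborFinset _ _ _).1 hc))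
  by_cases hxt : x = t
  · subst hxt
    rw [SimpleGraph.degree, SimpleGraph.degree, toggle_nbhd_core hGut.symm
      (fun hc => hGvt hc.symm) (Ne.symm hvt)
      (fun y => by unfold togglePairs; simp [Ne.symm hwt, Ne.symm hut, Ne.symm hvt])]
    exact card_insert_erase ((mem_neighborFinset _ _ _).2 hGut.symm)
      (fun hc => hGvt (((mem_neighborFinset _ _ _).1 hc).symm))
  · have : (toggle G w u v t).neighborFinset x = G.neighborFinset x := by
      ext y
      simp only [mem_neighborFinset]
      show ((G.Adj x y ∧ ¬ togglePairs w u v t x y) ∨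
        (¬ G.Adj x y ∧ x ≠ y ∧ togglePairs w u v t x y)) ↔ _
      unfold togglePairs
      constructor
      · rintro (⟨h, -⟩ | ⟨-, -, hP⟩)
        · exact h
        · tauto
      · intro h
        exact Or.inl ⟨h, by tauto⟩
    rw [SimpleGraph.degree, SimpleGraph.degree, this]

/-- the neighborhood of `w` after toggling -/
lemma toggle_nbhd_w (hwu : w ≠ u) (hwv : w ≠ v) (hwt : w ≠ t)
    (hGwv : G.Adj w v) (hGwu : ¬ G.Adj w u) :
    (toggle G w u v t).neighborFinset w = insert u ((G.neighborFinset w).erase v) :=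
  toggle_nbhd_core hGwv hGwu hwu
    (fun y => by unfold togglePairs; simp [hwv, hwu, hwt])

end Switch

lemma switch_step (f : Fin (m + 1) → ℕ) (hf : Antitone f) (w : Fin (m + 1)) (hk : f w ≤ m)
    (G : SimpleGraph (Fin (m + 1))) (hdeg : ∀ v, G.degree v = f v)
    (hne : G.neighborFinset w ≠ layS w (f w)) :
    ∃ H : SimpleGraph (Fin (m + 1)), (∀ v, H.degree v = f v) ∧
      ∑ x ∈ H.neighborFinset w, x.1 < ∑ x ∈ G.neighborFinset w, x.1 := by
  have hcardN : (G.neighborFinset w).card = f w := by rw [← hdeg w]; rfl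
  have hcardS : (layS w (f w)).card = f w := card_layS hk
  obtain ⟨v0, hv0N, hv0S⟩ : ∃ v0 ∈ G.neighborFinset w, v0 ∉ layS w (f w) :=
    Finset.not_subset.1 fun hsub =>
      hne (Finset.eq_of_subset_of_card_le hsub (by rw [hcardS, hcardN]))
  obtain ⟨u0, hu0S, hu0N⟩ : ∃ u0 ∈ layS w (f w), u0 ∉ G.neighborFinset w :=
    Finset.not_subset.1 fun hsub =>
      hne (Finset.eq_of_subset_of_card_le hsub (by rw [hcardS, hcardN])).symm
  have hadjwv : G.Adj w v0 := (mem_neighborFinset _ _ _).1 hv0N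
  have hGwu : ¬ G.Adj w u0 := fun h => hu0N ((mem_neighborFinset _ _ _).2 h)
  obtain ⟨ju, hju, hju'⟩ := mem_layS.1 hu0S
  have hv0w : v0 ≠ w := hadjwv.ne'
  obtain ⟨jv, hjv'⟩ := Fin.exists_succAbove_eq hv0w
  have hjv : ¬ jv.1 < f w := by
    rw [← succAbove_mem_layS_iff (w := w), hjv']; exact hv0S
  have hult : u0 < v0 := by
    rw [← hju', ← hjv']
    exact Fin.strictMono_succAbove w (by rw [Fin.lt_def]; omega)
  have hfvu : f v0 ≤ f u0 := hf hult.le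
  have hwu : w ≠ u0 := fun h => Fin.succAbove_ne w ju (h ▸ hju')
  -- card comparison to find t0
  have hwNv : w ∈ G.neighborFinset v0 := (mem_neighborFinset _ _ _).2 hadjwv.symm
  have hwNu : w ∉ G.neighborFinset u0 :=
    fun h => hGwu (((mem_neighborFinset _ _ _).1 h).symm)
  have hdu : (G.neighborFinset u0).card = f u0 := by rw [← hdeg u0]; rfl
  have hdv : (G.neighborFinset v0).card = f v0 := by rw [← hdeg v0]; rfl
  set A := (G.neighborFinset u0).erase v0 with hA
  set B := ((G.neighborFinset v0).erase u0).erase w with hB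
  have hBA : B.card < A.card := by
    by_cases hc : v0 ∈ G.neighborFinset u0
    · have hc' : u0 ∈ G.neighborFinset v0 := by
        rw [mem_neighborFinset] at hc ⊢; exact hc.symm
      have h2 : 2 ≤ (G.neighborFinset v0).card := by
        rw [Nat.succ_le_iff]
        exact Finset.one_lt_card.2 ⟨w, hwNv, u0, hc', hwu⟩
      rw [hA, hB, Finset.card_erase_of_mem hc,
        Finset.card_erase_of_mem (Finset.mem_erase.2 ⟨hwu, hwNv⟩),
        Finset.card_erase_of_mem hc']
      omega
    · have hc' : u0 ∉ G.neighborFinset v0 := by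
        rw [mem_neighborFinset] at hc ⊢; exact fun h => hc h.symm
      have h1 : 1 ≤ (G.neighborFinset v0).card := Finset.card_pos.2 ⟨w, hwNv⟩
      rw [hA, hB, Finset.erase_eq_of_notMem hc, Finset.erase_eq_of_notMem hc',
        Finset.card_erase_of_mem hwNv]
      omega
  obtain ⟨t0, ht0A, ht0B⟩ : ∃ t0 ∈ A, t0 ∉ B :=
    Finset.not_subset.1 fun hsub => absurd (Finset.card_le_card hsub) (not_le.2 hBA)
  have ht0v : t0 ≠ v0 := (Finset.mem_erase.1 ht0A).1
  have hGut : G.Adj u0 t0 :=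
    (mem_neighborFinset _ _ _).1 (Finset.mem_of_mem_erase ht0A)
  have ht0w : t0 ≠ w := fun h => hwNu (h ▸ Finset.mem_of_mem_erase ht0A)
  have hGvt : ¬ G.Adj v0 t0 := by
    intro h
    exact ht0B (Finset.mem_erase.2 ⟨ht0w, Finset.mem_erase.2 ⟨hGut.ne', (mem_neighborFinset _ _ _).2 h⟩⟩)
  -- build the switched graph
  have hwv : w ≠ v0 := hadjwv.ne
  have hwt : w ≠ t0 := Ne.symm ht0w
  have huv : u0 ≠ v0 := ne_of_lt hult
  have hut : u0 ≠ t0 := hGut.ne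
  have hvt : v0 ≠ t0 := Ne.symm ht0v
  refine ⟨toggle G w u0 v0 t0, fun x => by
    rw [toggle_degree_eq hwu hwv hwt huv hut hvt hadjwv hGwu hGut hGvt x, hdeg], ?_⟩
  rw [toggle_nbhd_w hwu hwv hwt hadjwv hGwu]
  have hu0E : u0 ∉ (G.neighborFinset w).erase v0 :=
    fun h => hu0N (Finset.mem_of_mem_erase h)
  rw [Finset.sum_insert hu0E]
  have hsum1 : (∑ x ∈ (G.neighborFinset w).erase v0, x.1) + v0.1
      = ∑ x ∈ G.neighborFinset w, x.1 := Finset.sum_erase_add _ _ hv0N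
  have hlt : u0.1 < v0.1 := hult
  omega

lemma switch_to_canonical (f : Fin (m + 1) → ℕ) (hf : Antitone f) (w : Fin (m + 1))
    (hk : f w ≤ m) (G : SimpleGraph (Fin (m + 1))) (hdeg : ∀ v, G.degree v = f v) :
    ∃ H : SimpleGraph (Fin (m + 1)), (∀ v, H.degree v = f v) ∧
      H.neighborFinset w = layS w (f w) := by
  suffices h : ∀ c (G : SimpleGraph (Fin (m + 1))), (∀ v, G.degree v = f v) →
      (∑ x ∈ G.neighborFinset w, x.1) ≤ c →
      ∃ H : SimpleGraph (Fin (m + 1)), (∀ v, H.degree v = f v) ∧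
        H.neighborFinset w = layS w (f w) from h _ G hdeg le_rfl
  intro c
  induction c with
  | zero =>
    intro G hG hb
    by_cases hN : G.neighborFinset w = layS w (f w)
    · exact ⟨G, hG, hN⟩
    · obtain ⟨H, hH, hlt⟩ := switch_step f hf w hk G hG hN
      omega
  | succ c ih =>
    intro G hG hb
    by_cases hN : G.neighborFinset w = layS w (f w)
    · exact ⟨G, hG, hN⟩
    · obtain ⟨H, hH, hlt⟩ := switch_step f hf w hk G hG hN
      exact ih H hH (by omega)

lemma natCard_neighborSet {V : Type*} [Fintype V] [DecidableEq V] (G : SimpleGraph V) (v : V) :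
    Nat.card (G.neighborSet v) = G.degree v := by
  rw [Nat.card_eq_fintype_card]
  convert G.card_neighborSet_eq_degree v using 2

set_option maxHeartbeats 1000000 in
lemma realize_iff (f : Fin (m + 1) → ℕ) (hf : Antitone f) (hfpos : ∀ v, 1 ≤ f v)
    (w : Fin (m + 1)) (hk : f w ≤ m) :
    (∃ G' : SimpleGraph (Fin m), ∀ j, Nat.card (G'.neighborSet j)
        = f (w.succAbove j) - (if j.1 < f w then 1 else 0)) ↔
    (∃ G : SimpleGraph (Fin (m + 1)), ∀ v, Nat.card (G.neighborSet v) = f v) := by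
  constructor
  · rintro ⟨G', hG'⟩
    have hd' : ∀ j, G'.degree j = f (w.succAbove j) - (if j.1 < f w then 1 else 0) :=
      fun j => by rw [← natCard_neighborSet]; exact hG' j
    refine ⟨addVert G' w (f w), fun v => ?_⟩
    rw [natCard_neighborSet]
    by_cases hvw : v = w
    · rw [hvw]; exact addVert_degree_w G' w hk
    · obtain ⟨j, rfl⟩ := Fin.exists_succAbove_eq hvw
      rw [addVert_degree_other, hd' j]
      have := hfpos (w.succAbove j)
      split_ifs <;> omega
  · rintro ⟨G, hG⟩
    have hdeg : ∀ v, G.degree v = f v := fun v => by rw [← natCard_neighborSet]; exact hG v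
    obtain ⟨H, hH, hN⟩ := switch_to_canonical f hf w hk G hdeg
    refine ⟨H.comap w.succAbove, fun j => ?_⟩
    rw [natCard_neighborSet]
    exact delete_vertex f w H hH hN j


/-- Kleitman–Wang theorem: for a nonincreasing sequence `D` of positive integers with
`d 1 < n` and `i ∈ [1..n]`, the sequence `D^⟨i⟩` obtained by laying off `d i`
(removing `d i` and subtracting `1` from the `d i` leftmost, i.e. largest, remaining
entries) is graphic iff `D` is graphic. The remaining entries, in order, are
`j ↦ d j` for `j < i` and `j ↦ d (j+1)` for `j ≥ i`. -/
theorem stmt_19 (n : ℕ) (d : ℕ → ℕ) (hn : 1 ≤ n)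
    (hpos : ∀ i, 1 ≤ i → i ≤ n → 1 ≤ d i)
    (hmono : ∀ i j, 1 ≤ i → i ≤ j → j ≤ n → d j ≤ d i)
    (h1 : d 1 < n)
    (i : ℕ) (hi1 : 1 ≤ i) (hin : i ≤ n) :
    IsGraphic (List.ofFn fun j : Fin (n - 1) =>
        (if j.1 + 1 < i then d (j.1 + 1) else d (j.1 + 2)) -
          (if j.1 + 1 ≤ d i then 1 else 0)) ↔
      IsGraphic (List.ofFn fun j : Fin n => d (j.1 + 1)) := by
  obtain ⟨m, rfl⟩ : ∃ m, n = m + 1 := ⟨n - 1, by omega⟩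
  have hm : m + 1 - 1 = m := rfl
  set w : Fin (m + 1) := ⟨i - 1, by omega⟩ with hwdef
  set f : Fin (m + 1) → ℕ := (fun v => d (v.1 + 1)) with hfdef
  have hfw : f w = d i := by
    simp only [hfdef, hwdef]
    congr 1
    omega
  have hant : Antitone f := fun a b hab =>
    hmono (a.1 + 1) (b.1 + 1) (by omega) (by omega) (by omega)
  have hfpos : ∀ v, 1 ≤ f v := fun v => hpos _ (by omega) (by omega)
  have hk : f w ≤ m := by
    have hd1 : d i ≤ d 1 := hmono 1 i (le_refl 1) hi1 hin
    omega
  have hval : ∀ j : Fin m, (w.succAbove j).1 = if j.1 < i - 1 then j.1 else j.1 + 1 := by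
    intro j
    rw [Fin.succAbove]
    by_cases hc : j.1 < i - 1
    · rw [if_pos (show j.castSucc < w by rw [Fin.lt_def]; exact hc), if_pos hc]
      rfl
    · rw [if_neg (show ¬ j.castSucc < w by rw [Fin.lt_def]; exact hc), if_neg hc]
      rfl
  have hfun : (fun j : Fin (m + 1 - 1) =>
        (if j.1 + 1 < i then d (j.1 + 1) else d (j.1 + 2)) -
          (if j.1 + 1 ≤ d i then 1 else 0))
      = (fun j : Fin m => f (w.succAbove j) - (if j.1 < f w then 1 else 0)) := by
    funext j
    have h1' : (if j.1 + 1 < i then d (j.1 + 1) else d (j.1 + 2)) = f (w.succAbove j) := by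
      have : f (w.succAbove j) = d ((w.succAbove j).1 + 1) := rfl
      rw [this, hval j]
      by_cases hc : j.1 < i - 1
      · rw [if_pos hc, if_pos (by omega)]
      · rw [if_neg hc, if_neg (by omega)]
    have h2' : (if j.1 + 1 ≤ d i then 1 else 0) = (if j.1 < f w then 1 else 0) := by
      by_cases hc : j.1 + 1 ≤ d i
      · rw [if_pos hc, if_pos (by omega)]
      · rw [if_neg hc, if_neg (by omega)]
    rw [h1', h2']
  rw [hfun]
  rw [isGraphic_ofFn_iff, isGraphic_ofFn_iff]
  exact realize_iff f hant hfpos w hk
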